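/- Let F_R be a rooted graph with λ := lim_{ℓ→∞} λ₁(F_R, ℓ) satisfying λ < −λ₀ for some λ₀ ≥ 2. Then there exists m ∈ ℕ⁺ such that the clique extension (F_R, K_m) has smallest eigenvalue less than −λ₀. -/

import Mathlib

open Matrix Filter
open scoped Classical

noncomputable def adjM {α : Type*} [Fintype α] (G : SimpleGraph α) : Matrix α α ℝ :=
  fun x y => if G.Adj x y then 1 else 0

noncomputable def minEig {α : Type*} [Fintype α] (G : SimpleGraph α) : ℝ :=
  sInf {μ : ℝ | ∃ x : α → ℝ, x ≠ 0 ∧ adjM G *ᵥ x = μ • x}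

/-- The path extension `(F_R, ℓ)`: add a path `v_0 … v_ℓ` (vertices `Fin (ℓ+1)`) to `F`,
joining `v_0` to every vertex of the root set `R`. -/
def pathExt {V : Type*} (F : SimpleGraph V) (R : Set V) (ℓ : ℕ) :
    SimpleGraph (V ⊕ Fin (ℓ + 1)) :=
  SimpleGraph.fromRel (fun x y =>
    match x, y with
    | Sum.inl u, Sum.inl v => F.Adj u v
    | Sum.inl u, Sum.inr i => u ∈ R ∧ (i : ℕ) = 0
    | Sum.inr i, Sum.inr j => (j : ℕ) = (i : ℕ) + 1
    | _, _ => False)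

/-- The clique extension `(F_R, K_m)`: add an `m`-clique to `F`, joining every clique
vertex to every vertex of `R`. -/
def cliqueExt {V : Type*} (F : SimpleGraph V) (R : Set V) (m : ℕ) :
    SimpleGraph (V ⊕ Fin m) :=
  SimpleGraph.fromRel (fun x y =>
    match x, y with
    | Sum.inl u, Sum.inl v => F.Adj u v
    | Sum.inl u, Sum.inr _ => u ∈ R
    | Sum.inr i, Sum.inr j => i ≠ j
    | _, _ => False)



section Spectral
variable {n : Type*} [Fintype n] [DecidableEq n]

omit [DecidableEq n] in
lemma dp_inner (x y : n → ℝ) :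
    (inner ℝ ((WithLp.equiv 2 (n → ℝ)).symm x) ((WithLp.equiv 2 (n → ℝ)).symm y) : ℝ)
      = x ⬝ᵥ y := by
  rw [EuclideanSpace.inner_eq_star_dotProduct]; simp; exact dotProduct_comm y x

omit [Fintype n] [DecidableEq n] in
lemma transpose_of_herm {A : Matrix n n ℝ} (hA : A.IsHermitian) : Aᵀ = A := by
  ext a b
  have := congrFun (congrFun hA a) b
  simpa [conjTranspose_apply] using this

lemma quadform_eq {A : Matrix n n ℝ} (hA : A.IsHermitian) (x : n → ℝ) :
    x ⬝ᵥ (A *ᵥ x) = ∑ i, hA.eigenvalues i *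
      (((WithLp.equiv 2 (n → ℝ)) (hA.eigenvectorBasis i)) ⬝ᵥ x)^2 := by
  have hb : ∀ i : n, hA.eigenvectorBasis i
      = (WithLp.equiv 2 (n → ℝ)).symm ((WithLp.equiv 2 (n → ℝ)) (hA.eigenvectorBasis i)) :=
    fun i => (Equiv.symm_apply_apply _ _).symm
  have h1 := (hA.eigenvectorBasis).sum_inner_mul_inner
      ((WithLp.equiv 2 (n → ℝ)).symm x) ((WithLp.equiv 2 (n → ℝ)).symm (A *ᵥ x))
  rw [← dp_inner x (A *ᵥ x), ← h1]
  refine Finset.sum_congr rfl fun i _ => ?_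
  rw [hb i, dp_inner, dp_inner]
  simp only [Equiv.symm_apply_apply] at *
  set w := (WithLp.equiv 2 (n → ℝ)) (hA.eigenvectorBasis i) with hw
  have hsym : w ⬝ᵥ (A *ᵥ x) = (A *ᵥ w) ⬝ᵥ x := by
    rw [dotProduct_mulVec, ← mulVec_transpose, transpose_of_herm hA]
  have hev : A *ᵥ w = hA.eigenvalues i • w := hA.mulVec_eigenvectorBasis i
  rw [hsym, hev, smul_dotProduct, dotProduct_comm x, smul_eq_mul]
  ring

lemma normsq_eq {A : Matrix n n ℝ} (hA : A.IsHermitian) (x : n → ℝ) :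
    x ⬝ᵥ x = ∑ i, (((WithLp.equiv 2 (n → ℝ)) (hA.eigenvectorBasis i)) ⬝ᵥ x)^2 := by
  have hb : ∀ i : n, hA.eigenvectorBasis i
      = (WithLp.equiv 2 (n → ℝ)).symm ((WithLp.equiv 2 (n → ℝ)) (hA.eigenvectorBasis i)) :=
    fun i => (Equiv.symm_apply_apply _ _).symm
  have h1 := (hA.eigenvectorBasis).sum_inner_mul_inner
      ((WithLp.equiv 2 (n → ℝ)).symm x) ((WithLp.equiv 2 (n → ℝ)).symm x)
  rw [← dp_inner x x, ← h1]
  refine Finset.sum_congr rfl fun i _ => ?_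
  rw [hb i, dp_inner, dp_inner]
  simp only [Equiv.apply_symm_apply]
  rw [dotProduct_comm x]; ring
end Spectral


section MinEig
variable {α : Type*} [Fintype α] [Nonempty α]

lemma adjM_isHermitian (G : SimpleGraph α) : (adjM G).IsHermitian := by
  ext a b
  simp only [adjM, conjTranspose_apply, star_trivial]
  rw [SimpleGraph.adj_comm]

lemma exists_min_eig (G : SimpleGraph α) :
    ∃ t : ℝ, (∃ x : α → ℝ, x ≠ 0 ∧ adjM G *ᵥ x = t • x) ∧
      ∀ x : α → ℝ, t * (x ⬝ᵥ x) ≤ x ⬝ᵥ (adjM G *ᵥ x) := by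
  classical
  have hA := adjM_isHermitian G
  obtain ⟨i0, -, hmin⟩ := Finset.exists_min_image Finset.univ hA.eigenvalues
    Finset.univ_nonempty
  refine ⟨hA.eigenvalues i0, ⟨(WithLp.equiv 2 (α → ℝ)) (hA.eigenvectorBasis i0), ?_,
    hA.mulVec_eigenvectorBasis i0⟩, ?_⟩
  · intro h0
    have := hA.eigenvectorBasis.orthonormal.ne_zero i0
    apply this
    have : hA.eigenvectorBasis i0
        = (WithLp.equiv 2 (α → ℝ)).symm ((WithLp.equiv 2 (α → ℝ)) (hA.eigenvectorBasis i0)) :=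
      (Equiv.symm_apply_apply _ _).symm
    rw [this, h0, WithLp.equiv_symm_apply, WithLp.toLp_zero]
  · intro x
    rw [quadform_eq hA, normsq_eq hA, Finset.mul_sum]
    refine Finset.sum_le_sum fun i _ => ?_
    exact mul_le_mul_of_nonneg_right (hmin i (Finset.mem_univ i)) (sq_nonneg _)

lemma dotProduct_self_pos {x : α → ℝ} (hx : x ≠ 0) : 0 < x ⬝ᵥ x := by
  rcases lt_or_eq_of_le (Finset.sum_nonneg fun i _ => mul_self_nonneg (x i)) with h | h
  · exact h
  · exact absurd (dotProduct_self_eq_zero.mp h.symm) hx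

lemma minEig_set_nonempty (G : SimpleGraph α) :
    {μ : ℝ | ∃ x : α → ℝ, x ≠ 0 ∧ adjM G *ᵥ x = μ • x}.Nonempty := by
  obtain ⟨t, ht, -⟩ := exists_min_eig G
  exact ⟨t, ht⟩

lemma minEig_le_rayleigh (G : SimpleGraph α) (x : α → ℝ) :
    minEig G * (x ⬝ᵥ x) ≤ x ⬝ᵥ (adjM G *ᵥ x) := by
  obtain ⟨t, htS, hlb⟩ := exists_min_eig G
  have hbdd : ∀ μ ∈ {μ : ℝ | ∃ x : α → ℝ, x ≠ 0 ∧ adjM G *ᵥ x = μ • x}, t ≤ μ := by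
    rintro μ ⟨w, hw0, hw⟩
    have h1 : t * (w ⬝ᵥ w) ≤ μ * (w ⬝ᵥ w) := by
      have := hlb w
      rwa [hw, dotProduct_smul, smul_eq_mul] at this
    exact le_of_mul_le_mul_right h1 (dotProduct_self_pos hw0)
  have hle : minEig G ≤ t := csInf_le ⟨t, hbdd⟩ htS
  calc minEig G * (x ⬝ᵥ x) ≤ t * (x ⬝ᵥ x) :=
        mul_le_mul_of_nonneg_right hle (Finset.sum_nonneg fun i _ => mul_self_nonneg (x i))
    _ ≤ _ := hlb x

lemma exists_eig_lt {G : SimpleGraph α} {a : ℝ} (h : minEig G < a) :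
    ∃ μ : ℝ, μ < a ∧ ∃ x : α → ℝ, x ≠ 0 ∧ adjM G *ᵥ x = μ • x := by
  obtain ⟨μ, hμS, hμa⟩ := exists_lt_of_csInf_lt (minEig_set_nonempty G) h
  exact ⟨μ, hμa, hμS⟩

end MinEig

section Adj
variable {V : Type*} {F : SimpleGraph V} {R : Set V}

lemma padj_ll {ℓ : ℕ} {u v : V} :
    (pathExt F R ℓ).Adj (Sum.inl u) (Sum.inl v) ↔ F.Adj u v := by
  simp only [pathExt, SimpleGraph.fromRel_adj]
  constructor
  · rintro ⟨-, h | h⟩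
    · exact h
    · exact h.symm
  · intro h
    exact ⟨by simpa using h.ne, Or.inl h⟩

lemma padj_lr {ℓ : ℕ} {u : V} {i : Fin (ℓ+1)} :
    (pathExt F R ℓ).Adj (Sum.inl u) (Sum.inr i) ↔ u ∈ R ∧ (i : ℕ) = 0 := by
  simp only [pathExt, SimpleGraph.fromRel_adj]
  constructor
  · rintro ⟨-, h | h⟩
    · exact h
    · exact h.elim
  · intro h
    exact ⟨by simp, Or.inl h⟩

lemma padj_rl {ℓ : ℕ} {u : V} {i : Fin (ℓ+1)} :
    (pathExt F R ℓ).Adj (Sum.inr i) (Sum.inl u) ↔ u ∈ R ∧ (i : ℕ) = 0 := by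
  rw [SimpleGraph.adj_comm]; exact padj_lr

lemma padj_rr {ℓ : ℕ} {i j : Fin (ℓ+1)} :
    (pathExt F R ℓ).Adj (Sum.inr i) (Sum.inr j) ↔
      ((j : ℕ) = (i : ℕ) + 1 ∨ (i : ℕ) = (j : ℕ) + 1) := by
  simp only [pathExt, SimpleGraph.fromRel_adj]
  constructor
  · rintro ⟨-, h⟩; exact h
  · intro h
    refine ⟨?_, h⟩
    rcases h with h | h <;> · intro he; injection he with he'; rw [he'] at h; omega

lemma cadj_ll {m : ℕ} {u v : V} :
    (cliqueExt F R m).Adj (Sum.inl u) (Sum.inl v) ↔ F.Adj u v := by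
  simp only [cliqueExt, SimpleGraph.fromRel_adj]
  constructor
  · rintro ⟨-, h | h⟩
    · exact h
    · exact h.symm
  · intro h
    exact ⟨by simpa using h.ne, Or.inl h⟩

lemma cadj_lr {m : ℕ} {u : V} {i : Fin m} :
    (cliqueExt F R m).Adj (Sum.inl u) (Sum.inr i) ↔ u ∈ R := by
  simp only [cliqueExt, SimpleGraph.fromRel_adj]
  constructor
  · rintro ⟨-, h | h⟩
    · exact h
    · exact h.elim
  · intro h
    exact ⟨by simp, Or.inl h⟩

lemma cadj_rl {m : ℕ} {u : V} {i : Fin m} :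
    (cliqueExt F R m).Adj (Sum.inr i) (Sum.inl u) ↔ u ∈ R := by
  rw [SimpleGraph.adj_comm]; exact cadj_lr

lemma cadj_rr {m : ℕ} {i j : Fin m} :
    (cliqueExt F R m).Adj (Sum.inr i) (Sum.inr j) ↔ i ≠ j := by
  simp only [cliqueExt, SimpleGraph.fromRel_adj]
  constructor
  · rintro ⟨h, -⟩
    intro he; exact h (by rw [he])
  · intro h
    exact ⟨by simpa using h, Or.inl h⟩

end Adj

lemma adjM_ite {α : Type*} [Fintype α] (G : SimpleGraph α) (a b : α) :
    adjM G a b = if G.Adj a b then 1 else 0 := rfl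


set_option maxHeartbeats 1000000 in
/-- If `lim_{ℓ→∞} λ₁(F_R, ℓ) < -λ₀` with `λ₀ ≥ 2`, then some clique extension
`(F_R, K_m)` has smallest eigenvalue `< -λ₀`. -/
theorem stmt10 {V : Type*} [Fintype V] (F : SimpleGraph V) (R : Set V) (hR : R.Nonempty)
    (lam lam₀ : ℝ) (hlam₀ : 2 ≤ lam₀)
    (hlim : Filter.Tendsto (fun ℓ => minEig (pathExt F R ℓ)) Filter.atTop (nhds lam))
    (h : lam < -lam₀) :
    ∃ m : ℕ, 0 < m ∧ minEig (cliqueExt F R m) < -lam₀ := by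
  classical
  obtain ⟨ℓ, hℓ⟩ := (hlim.eventually_lt_const h).exists
  have hne : Nonempty (V ⊕ Fin (ℓ + 1)) := ⟨Sum.inr 0⟩
  obtain ⟨μ, hμ, x, hx0, hxe⟩ := exists_eig_lt hℓ
  -- abbreviations
  set z : V → ℝ := fun u => x (Sum.inl u) with hzdef
  set q : ℕ → ℝ := fun i => if hi : i < ℓ + 1 then x (Sum.inr ⟨i, hi⟩) else 0 with hqdef
  have hq' : ∀ i : Fin (ℓ + 1), q (i : ℕ) = x (Sum.inr i) := by
    intro i; simp [hqdef, i.isLt]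
    intro h; exact absurd i.isLt (by omega)
  have hqz : ∀ i, ℓ + 1 ≤ i → q i = 0 := by
    intro i hi; rw [hqdef]; exact dif_neg (by omega)
  set s : ℝ := ∑ u, if u ∈ R then z u else 0 with hsdef
  set QF : ℝ := ∑ u, z u * ∑ v, (if F.Adj u v then 1 else 0) * z v with hQFdef
  set Sz : ℝ := ∑ u, z u * z u with hSzdef
  set Sp : ℝ := ∑ i ∈ Finset.range (ℓ + 1), q i * q i with hSpdef
  set T : ℝ := ∑ i ∈ Finset.range (ℓ + 1), q i * q (i + 1) with hTdef
  -- generic pick lemma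
  have pick : ∀ k : ℕ, (∑ j : Fin (ℓ + 1), (if (j : ℕ) = k then (1:ℝ) else 0) * x (Sum.inr j))
      = q k := by
    intro k
    have e1 : ∀ j : Fin (ℓ + 1), (if (j : ℕ) = k then (1:ℝ) else 0) * x (Sum.inr j)
        = (fun jj : ℕ => if jj = k then q jj else 0) (j : ℕ) := by
      intro j
      by_cases hj : (j : ℕ) = k
      · rw [if_pos hj, one_mul]
        show x (Sum.inr j) = if (j : ℕ) = k then q (j : ℕ) else 0
        rw [if_pos hj, hq' j]
      · simp [hj]
    calc (∑ j : Fin (ℓ + 1), (if (j : ℕ) = k then (1:ℝ) else 0) * x (Sum.inr j))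
        = ∑ j : Fin (ℓ + 1), (fun jj : ℕ => if jj = k then q jj else 0) (j : ℕ) :=
          Finset.sum_congr rfl fun j _ => e1 j
      _ = ∑ jj ∈ Finset.range (ℓ + 1), (if jj = k then q jj else 0) :=
          Fin.sum_univ_eq_sum_range (fun jj : ℕ => if jj = k then q jj else 0) (ℓ + 1)
      _ = if k ∈ Finset.range (ℓ + 1) then q k else 0 := Finset.sum_ite_eq' _ _ _
      _ = q k := by
          split
          · rfl
          · rename_i hk
            rw [hqz k (by simpa using hk)]
  have bpick : ∀ k : ℕ,
      (∑ j : Fin (ℓ + 1), (if k = (j : ℕ) + 1 then (1:ℝ) else 0) * x (Sum.inr j))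
      = if k = 0 then 0 else q (k - 1) := by
    intro k
    match k with
    | 0 => simp
    | (k' + 1) =>
      have e1 : ∀ j : Fin (ℓ + 1), (if k' + 1 = (j : ℕ) + 1 then (1:ℝ) else 0)
          = (if (j : ℕ) = k' then (1:ℝ) else 0) := by
        intro j
        by_cases hj : (j : ℕ) = k' <;> simp [hj] <;> omega
      simp only [e1]
      rw [pick k']
      simp
  -- row equations
  have hrow : ∀ a, (∑ u, adjM (pathExt F R ℓ) a (Sum.inl u) * z u)
      + (∑ i : Fin (ℓ + 1), adjM (pathExt F R ℓ) a (Sum.inr i) * x (Sum.inr i))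
      = μ * x a := by
    intro a
    have hc := congrFun hxe a
    rw [Pi.smul_apply, smul_eq_mul] at hc
    rw [← hc]
    have e : (adjM (pathExt F R ℓ) *ᵥ x) a = ∑ b, adjM (pathExt F R ℓ) a b * x b := rfl
    rw [e]
    exact (Fintype.sum_sum_type (fun b => adjM (pathExt F R ℓ) a b * x b)).symm
  have hrowl : ∀ u, (∑ v, (if F.Adj u v then (1:ℝ) else 0) * z v)
      + (if u ∈ R then (1:ℝ) else 0) * q 0 = μ * z u := by
    intro u
    have h1 := hrow (Sum.inl u)
    have e1 : ∀ v, adjM (pathExt F R ℓ) (Sum.inl u) (Sum.inl v)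
        = (if F.Adj u v then (1:ℝ) else 0) := by
      intro v
      rw [adjM_ite]
      by_cases hv : F.Adj u v
      · rw [if_pos (padj_ll.mpr hv), if_pos hv]
      · rw [if_neg (fun hc => hv (padj_ll.mp hc)), if_neg hv]
    have e2 : (∑ i : Fin (ℓ + 1), adjM (pathExt F R ℓ) (Sum.inl u) (Sum.inr i) * x (Sum.inr i))
        = (if u ∈ R then (1:ℝ) else 0) * q 0 := by
      by_cases hu : u ∈ R
      · rw [if_pos hu, one_mul, ← pick 0]
        refine Finset.sum_congr rfl fun i _ => ?_
        congr 1
        rw [adjM_ite]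
        by_cases hi : (i : ℕ) = 0
        · rw [if_pos (padj_lr.mpr ⟨hu, hi⟩), if_pos hi]
        · rw [if_neg (fun hc => hi (padj_lr.mp hc).2), if_neg hi]
      · rw [if_neg hu, zero_mul]
        refine Finset.sum_eq_zero fun i _ => ?_
        rw [adjM_ite, if_neg (fun hc => hu (padj_lr.mp hc).1), zero_mul]
    rw [e2] at h1
    simp only [e1] at h1
    exact h1
  have hrowr : ∀ k : ℕ, ∀ hk : k < ℓ + 1,
      (if k = 0 then s else 0) + (q (k + 1) + (if k = 0 then 0 else q (k - 1)))
      = μ * q k := by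
    intro k hk
    have h1 := hrow (Sum.inr ⟨k, hk⟩)
    have hvk : (((⟨k, hk⟩ : Fin (ℓ + 1))) : ℕ) = k := rfl
    have e1 : (∑ u, adjM (pathExt F R ℓ) (Sum.inr ⟨k, hk⟩) (Sum.inl u) * z u)
        = (if k = 0 then s else 0) := by
      by_cases hk0 : k = 0
      · rw [if_pos hk0, hsdef]
        refine Finset.sum_congr rfl fun u _ => ?_
        rw [adjM_ite]
        by_cases hu : u ∈ R
        · rw [if_pos (padj_rl.mpr ⟨hu, by rw [hvk, hk0]⟩), if_pos hu, one_mul]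
        · rw [if_neg (fun hc => hu (padj_rl.mp hc).1), if_neg hu, zero_mul]
      · rw [if_neg hk0]
        refine Finset.sum_eq_zero fun u _ => ?_
        rw [adjM_ite, if_neg (fun hc => hk0 (by rw [← hvk]; exact (padj_rl.mp hc).2)), zero_mul]
    have e3 : ∀ j : Fin (ℓ + 1),
        adjM (pathExt F R ℓ) (Sum.inr ⟨k, hk⟩) (Sum.inr j) * x (Sum.inr j)
        = (if (j : ℕ) = k + 1 then (1:ℝ) else 0) * x (Sum.inr j)
          + (if k = (j : ℕ) + 1 then (1:ℝ) else 0) * x (Sum.inr j) := by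
      intro j
      rw [← add_mul]
      congr 1
      rw [adjM_ite]
      by_cases h1 : (j : ℕ) = k + 1 <;> by_cases h2 : k = (j : ℕ) + 1
      · exact absurd h2 (by omega)
      · rw [if_pos (padj_rr.mpr (Or.inl (by rw [hvk]; exact h1))), if_pos h1, if_neg h2]
        norm_num
      · rw [if_pos (padj_rr.mpr (Or.inr (by rw [hvk]; exact h2))), if_neg h1, if_pos h2]
        norm_num
      · rw [if_neg, if_neg h1, if_neg h2]
        · norm_num
        · rw [padj_rr, hvk]
          rintro (hc | hc)
          · exact h1 hc
          · exact h2 hc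
    have e2 : (∑ i : Fin (ℓ + 1),
          adjM (pathExt F R ℓ) (Sum.inr ⟨k, hk⟩) (Sum.inr i) * x (Sum.inr i))
        = q (k + 1) + (if k = 0 then 0 else q (k - 1)) := by
      simp only [e3]
      rw [Finset.sum_add_distrib, pick (k + 1), bpick k]
    rw [e1, e2] at h1
    rw [← hq' ⟨k, hk⟩] at h1
    exact h1
  -- derived quadratic identities
  have hx2 : x ⬝ᵥ x = Sz + Sp := by
    rw [show x ⬝ᵥ x = (∑ u, x (Sum.inl u) * x (Sum.inl u))
        + ∑ i : Fin (ℓ + 1), x (Sum.inr i) * x (Sum.inr i) from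
          Fintype.sum_sum_type (fun a => x a * x a)]
    congr 1
    rw [hSpdef, ← Fin.sum_univ_eq_sum_range (fun i => q i * q i) (ℓ + 1)]
    exact Finset.sum_congr rfl fun i _ => by rw [hq' i]
  have key1 : QF + q 0 * s = μ * Sz := by
    have h1 : ∀ u, z u * ((∑ v, (if F.Adj u v then (1:ℝ) else 0) * z v)
        + (if u ∈ R then (1:ℝ) else 0) * q 0) = z u * (μ * z u) := fun u => by rw [hrowl u]
    have h2 := Finset.sum_congr rfl fun u (_ : u ∈ (Finset.univ : Finset V)) => h1 u
    simp only [mul_add] at h2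
    rw [Finset.sum_add_distrib] at h2
    have e1 : (∑ u, z u * ((if u ∈ R then (1:ℝ) else 0) * q 0)) = q 0 * s := by
      rw [hsdef, Finset.mul_sum]
      refine Finset.sum_congr rfl fun u _ => ?_
      by_cases hu : u ∈ R
      · rw [if_pos hu, if_pos hu]; ring
      · rw [if_neg hu, if_neg hu]; ring
    rw [e1] at h2
    rw [hQFdef, h2, hSzdef, Finset.mul_sum]
    exact Finset.sum_congr rfl fun u _ => by ring
  have key2 : q 0 * s + 2 * T = μ * Sp := by
    have h2 : (∑ k ∈ Finset.range (ℓ + 1),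
        q k * ((if k = 0 then s else 0) + (q (k + 1) + (if k = 0 then 0 else q (k - 1)))))
        = ∑ k ∈ Finset.range (ℓ + 1), q k * (μ * q k) :=
      Finset.sum_congr rfl fun k hk => by rw [hrowr k (Finset.mem_range.mp hk)]
    have hrhs : (∑ k ∈ Finset.range (ℓ + 1), q k * (μ * q k)) = μ * Sp := by
      rw [hSpdef, Finset.mul_sum]
      exact Finset.sum_congr rfl fun k _ => by ring
    have hsplit : (∑ k ∈ Finset.range (ℓ + 1),
        q k * ((if k = 0 then s else 0) + (q (k + 1) + (if k = 0 then 0 else q (k - 1)))))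
        = (∑ k ∈ Finset.range (ℓ + 1), (if k = 0 then q k * s else 0))
        + ((∑ k ∈ Finset.range (ℓ + 1), q k * q (k + 1))
        + (∑ k ∈ Finset.range (ℓ + 1), q k * (if k = 0 then 0 else q (k - 1)))) := by
      rw [← Finset.sum_add_distrib, ← Finset.sum_add_distrib]
      refine Finset.sum_congr rfl fun k _ => ?_
      by_cases hk : k = 0
      · rw [if_pos hk, if_pos hk, if_pos hk]; ring
      · rw [if_neg hk, if_neg hk, if_neg hk]; ring
    have e1 : (∑ k ∈ Finset.range (ℓ + 1), (if k = 0 then q k * s else 0)) = q 0 * s := by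
      rw [Finset.sum_ite_eq' (Finset.range (ℓ + 1)) 0 (fun k => q k * s)]
      simp
    have e2 : (∑ k ∈ Finset.range (ℓ + 1), q k * (if k = 0 then 0 else q (k - 1))) = T := by
      rw [Finset.sum_range_succ' (fun k => q k * (if k = 0 then 0 else q (k - 1))) ℓ]
      have hterm : ∀ k ∈ Finset.range ℓ,
          q (k + 1) * (if k + 1 = 0 then 0 else q (k + 1 - 1)) = q k * q (k + 1) := by
        intro k _
        rw [if_neg (Nat.succ_ne_zero k), Nat.add_sub_cancel]; ring
      rw [Finset.sum_congr rfl hterm, if_pos rfl, mul_zero, add_zero, hTdef,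
        Finset.sum_range_succ (fun i => q i * q (i + 1)) ℓ, hqz (ℓ + 1) le_rfl, mul_zero,
        add_zero]
    rw [hsplit, e1, e2, hrhs, ← hTdef] at h2
    linarith [h2]
  -- the key inequality on T
  have ineqT : -(2 * T) ≤ 2 * Sp - q 0 * q 0 := by
    have h0 : (0:ℝ) ≤ ∑ k ∈ Finset.range (ℓ + 1), (q k + q (k + 1)) ^ 2 :=
      Finset.sum_nonneg fun k _ => sq_nonneg _
    have e2 : (∑ k ∈ Finset.range (ℓ + 1), q (k + 1) * q (k + 1)) = Sp - q 0 * q 0 := by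
      have h3 := Finset.sum_range_succ' (fun k => q k * q k) (ℓ + 1)
      rw [Finset.sum_range_succ (fun k => q k * q k) (ℓ + 1), hqz (ℓ + 1) le_rfl] at h3
      simp only [mul_zero, add_zero] at h3
      rw [← hSpdef] at h3
      linarith [h3]
    have e1 : (∑ k ∈ Finset.range (ℓ + 1), (q k + q (k + 1)) ^ 2)
        = Sp + (Sp - q 0 * q 0) + 2 * T := by
      have hterm : ∀ k ∈ Finset.range (ℓ + 1), (q k + q (k + 1)) ^ 2
          = q k * q k + q (k + 1) * q (k + 1) + 2 * (q k * q (k + 1)) := by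
        intro k _; ring
      rw [Finset.sum_congr rfl hterm, Finset.sum_add_distrib, Finset.sum_add_distrib, e2,
        ← Finset.mul_sum, ← hSpdef, ← hTdef]
    rw [e1] at h0
    linarith
  -- nondegeneracy
  have hy0 : z ≠ 0 ∨ q 0 ≠ 0 := by
    by_contra hcon
    push_neg at hcon
    obtain ⟨hz0, hq0⟩ := hcon
    have hs0 : s = 0 := by
      rw [hsdef]
      refine Finset.sum_eq_zero fun u _ => ?_
      have : z u = 0 := congrFun hz0 u
      simp [this]
    have hind : ∀ k : ℕ, q k = 0 ∧ q (k + 1) = 0 := by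
      intro k
      induction k with
      | zero =>
        refine ⟨hq0, ?_⟩
        have h5 := hrowr 0 (by omega)
        rw [if_pos rfl, if_pos rfl, hq0, hs0] at h5
        simpa using h5
      | succ k ih =>
        refine ⟨ih.2, ?_⟩
        by_cases hk : k + 1 < ℓ + 1
        · have h5 := hrowr (k + 1) hk
          rw [if_neg (Nat.succ_ne_zero k), if_neg (Nat.succ_ne_zero k)] at h5
          simp only [Nat.add_sub_cancel] at h5
          rw [ih.1, ih.2] at h5
          simpa using h5
        · exact hqz _ (by omega)
    apply hx0
    funext a
    rcases a with u | i
    · exact congrFun hz0 u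
    · rw [← hq' i]
      exact (hind (i : ℕ)).1
  -- positivity facts
  have hSznn : 0 ≤ Sz := Finset.sum_nonneg fun u _ => mul_self_nonneg _
  have hSpnn : 0 ≤ Sp := Finset.sum_nonneg fun k _ => mul_self_nonneg _
  have hSzSp : 0 < Sz + Sp := by rw [← hx2]; exact dotProduct_self_pos hx0
  set δ : ℝ := -((μ + lam₀) * Sz + (μ + 2) * Sp) with hδdef
  have hμ2 : μ + 2 ≤ μ + lam₀ := by linarith
  have hμl : μ + lam₀ < 0 := by linarith
  have hδ : 0 < δ := by
    rw [hδdef]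
    have f1 : (μ + 2) * Sp ≤ (μ + lam₀) * Sp := mul_le_mul_of_nonneg_right hμ2 hSpnn
    have f2 : (μ + lam₀) * (Sz + Sp) < 0 := mul_neg_of_neg_of_pos hμl hSzSp
    nlinarith [f1, f2]
  -- choose m
  obtain ⟨m, hm⟩ := exists_nat_gt (max 1 (q 0 * q 0 * (lam₀ - 1) / δ))
  have hm1 : (1:ℝ) < (m:ℝ) := lt_of_le_of_lt (le_max_left _ _) hm
  have hmpos : 0 < m := by exact_mod_cast lt_trans zero_lt_one hm1
  have hmne : (m:ℝ) ≠ 0 := by positivity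
  have hmgt : q 0 * q 0 * (lam₀ - 1) < δ * m := by
    have h1 : q 0 * q 0 * (lam₀ - 1) / δ < (m:ℝ) := lt_of_le_of_lt (le_max_right _ _) hm
    calc q 0 * q 0 * (lam₀ - 1) = (q 0 * q 0 * (lam₀ - 1) / δ) * δ := by
          field_simp
      _ < (m:ℝ) * δ := mul_lt_mul_of_pos_right h1 hδ
      _ = δ * m := mul_comm _ _
  refine ⟨m, hmpos, ?_⟩
  have hnem : Nonempty (V ⊕ Fin m) := ⟨Sum.inr ⟨0, hmpos⟩⟩
  set c : ℝ := q 0 / m with hcdef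
  have hmc : (m:ℝ) * c = q 0 := by rw [hcdef]; field_simp
  set y : V ⊕ Fin m → ℝ := Sum.elim z (fun _ => c) with hydef
  have hynz : y ≠ 0 := by
    rcases hy0 with hz | hq0
    · intro h0
      apply hz
      funext u
      exact congrFun h0 (Sum.inl u)
    · intro h0
      have hc0 : c ≠ 0 := by
        rw [hcdef]
        exact div_ne_zero hq0 hmne
      exact hc0 (congrFun h0 (Sum.inr ⟨0, hmpos⟩))
  have hyy : y ⬝ᵥ y = Sz + (m:ℝ) * (c * c) := by
    rw [show y ⬝ᵥ y = (∑ u, y (Sum.inl u) * y (Sum.inl u))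
        + ∑ i : Fin m, y (Sum.inr i) * y (Sum.inr i) from
          Fintype.sum_sum_type (fun a => y a * y a)]
    have e1 : (∑ i : Fin m, y (Sum.inr i) * y (Sum.inr i)) = (m:ℝ) * (c * c) := by
      calc (∑ i : Fin m, y (Sum.inr i) * y (Sum.inr i)) = ∑ _i : Fin m, c * c :=
            Finset.sum_congr rfl fun i _ => rfl
        _ = (m:ℝ) * (c * c) := by
            rw [Finset.sum_const, Finset.card_univ, Fintype.card_fin, nsmul_eq_mul]
    have e2 : (∑ u, y (Sum.inl u) * y (Sum.inl u)) = Sz := by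
      rw [hSzdef]
      exact Finset.sum_congr rfl fun u _ => rfl
    rw [e1, e2]
  -- quadratic form for the clique extension
  have hrowc : ∀ a, (adjM (cliqueExt F R m) *ᵥ y) a
      = (∑ u, adjM (cliqueExt F R m) a (Sum.inl u) * z u)
      + (∑ i : Fin m, adjM (cliqueExt F R m) a (Sum.inr i) * c) := by
    intro a
    have e : (adjM (cliqueExt F R m) *ᵥ y) a = ∑ b, adjM (cliqueExt F R m) a b * y b := rfl
    rw [e]
    exact Fintype.sum_sum_type (fun b => adjM (cliqueExt F R m) a b * y b)
  have hsR : (∑ u, (if u ∈ R then (1:ℝ) else 0) * z u) = s := by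
    rw [hsdef]
    refine Finset.sum_congr rfl fun u _ => ?_
    by_cases hu : u ∈ R
    · rw [if_pos hu, if_pos hu, one_mul]
    · rw [if_neg hu, if_neg hu, zero_mul]
  have hrowcl : ∀ u, (adjM (cliqueExt F R m) *ᵥ y) (Sum.inl u)
      = (∑ v, (if F.Adj u v then (1:ℝ) else 0) * z v)
        + (m:ℝ) * ((if u ∈ R then (1:ℝ) else 0) * c) := by
    intro u
    rw [hrowc (Sum.inl u)]
    congr 1
    · refine Finset.sum_congr rfl fun v _ => ?_
      congr 1
      rw [adjM_ite]
      by_cases hv : F.Adj u v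
      · rw [if_pos (cadj_ll.mpr hv), if_pos hv]
      · rw [if_neg (fun hc => hv (cadj_ll.mp hc)), if_neg hv]
    · calc (∑ i : Fin m, adjM (cliqueExt F R m) (Sum.inl u) (Sum.inr i) * c)
          = ∑ _i : Fin m, (if u ∈ R then (1:ℝ) else 0) * c := by
            refine Finset.sum_congr rfl fun i _ => ?_
            congr 1
            rw [adjM_ite]
            by_cases hu : u ∈ R
            · rw [if_pos (cadj_lr.mpr hu), if_pos hu]
            · rw [if_neg (fun hc => hu (cadj_lr.mp hc)), if_neg hu]
        _ = (m:ℝ) * ((if u ∈ R then (1:ℝ) else 0) * c) := by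
            rw [Finset.sum_const, Finset.card_univ, Fintype.card_fin, nsmul_eq_mul]
  have hrowcr : ∀ i : Fin m, (adjM (cliqueExt F R m) *ᵥ y) (Sum.inr i)
      = s + ((m:ℝ) * c - c) := by
    intro i
    rw [hrowc (Sum.inr i)]
    congr 1
    · rw [← hsR]
      refine Finset.sum_congr rfl fun u _ => ?_
      congr 1
      rw [adjM_ite]
      by_cases hu : u ∈ R
      · rw [if_pos (cadj_rl.mpr hu), if_pos hu]
      · rw [if_neg (fun hc => hu (cadj_rl.mp hc)), if_neg hu]
    · have e1 : ∀ j : Fin m, adjM (cliqueExt F R m) (Sum.inr i) (Sum.inr j) * c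
          = c - (if j = i then c else 0) := by
        intro j
        rw [adjM_ite]
        by_cases hj : j = i
        · rw [if_neg (fun hc => (cadj_rr.mp hc) hj.symm), if_pos hj, zero_mul]
          ring
        · rw [if_pos (cadj_rr.mpr (fun hc => hj hc.symm)), if_neg hj, one_mul]
          ring
      calc (∑ j : Fin m, adjM (cliqueExt F R m) (Sum.inr i) (Sum.inr j) * c)
          = ∑ j : Fin m, (c - (if j = i then c else 0)) :=
            Finset.sum_congr rfl fun j _ => e1 j
        _ = (∑ _j : Fin m, c) - ∑ j : Fin m, (if j = i then c else 0) :=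
            Finset.sum_sub_distrib _ _
        _ = (m:ℝ) * c - c := by
            rw [Finset.sum_const, Finset.card_univ, Fintype.card_fin, nsmul_eq_mul,
              Finset.sum_ite_eq' Finset.univ i (fun _ => c), if_pos (Finset.mem_univ i)]
  have hQc : y ⬝ᵥ (adjM (cliqueExt F R m) *ᵥ y)
      = QF + (m:ℝ) * c * s + (m:ℝ) * (c * (s + ((m:ℝ) * c - c))) := by
    rw [show y ⬝ᵥ (adjM (cliqueExt F R m) *ᵥ y)
        = (∑ u, y (Sum.inl u) * (adjM (cliqueExt F R m) *ᵥ y) (Sum.inl u))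
        + ∑ i : Fin m, y (Sum.inr i) * (adjM (cliqueExt F R m) *ᵥ y) (Sum.inr i) from
          Fintype.sum_sum_type (fun a => y a * (adjM (cliqueExt F R m) *ᵥ y) a)]
    have e2 : (∑ u, y (Sum.inl u) * (adjM (cliqueExt F R m) *ᵥ y) (Sum.inl u))
        = QF + (m:ℝ) * c * s := by
      have hterm : ∀ u, y (Sum.inl u) * (adjM (cliqueExt F R m) *ᵥ y) (Sum.inl u)
          = z u * (∑ v, (if F.Adj u v then (1:ℝ) else 0) * z v)
            + (m:ℝ) * c * (if u ∈ R then z u else 0) := by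
        intro u
        rw [hrowcl u]
        have hyu : y (Sum.inl u) = z u := rfl
        rw [hyu]
        by_cases hu : u ∈ R
        · rw [if_pos hu, if_pos hu]; ring
        · rw [if_neg hu, if_neg hu]; ring
      calc (∑ u, y (Sum.inl u) * (adjM (cliqueExt F R m) *ᵥ y) (Sum.inl u))
          = ∑ u, (z u * (∑ v, (if F.Adj u v then (1:ℝ) else 0) * z v)
            + (m:ℝ) * c * (if u ∈ R then z u else 0)) :=
            Finset.sum_congr rfl fun u _ => hterm u
        _ = QF + (m:ℝ) * c * s := by
            rw [Finset.sum_add_distrib, ← Finset.mul_sum, ← hsdef, ← hQFdef]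
    have e3 : (∑ i : Fin m, y (Sum.inr i) * (adjM (cliqueExt F R m) *ᵥ y) (Sum.inr i))
        = (m:ℝ) * (c * (s + ((m:ℝ) * c - c))) := by
      calc (∑ i : Fin m, y (Sum.inr i) * (adjM (cliqueExt F R m) *ᵥ y) (Sum.inr i))
          = ∑ _i : Fin m, c * (s + ((m:ℝ) * c - c)) := by
            refine Finset.sum_congr rfl fun i _ => ?_
            rw [hrowcr i]
            rfl
        _ = (m:ℝ) * (c * (s + ((m:ℝ) * c - c))) := by
            rw [Finset.sum_const, Finset.card_univ, Fintype.card_fin, nsmul_eq_mul]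
    rw [e2, e3]
  -- final arithmetic
  have hYpos : 0 < y ⬝ᵥ y := dotProduct_self_pos hynz
  have hqc : q 0 * c = q 0 * q 0 / m := by rw [hcdef]; ring
  have hQclt : y ⬝ᵥ (adjM (cliqueExt F R m) *ᵥ y) < -lam₀ * (y ⬝ᵥ y) := by
    rw [hQc, hyy]
    have hmcc : (m:ℝ) * (c * c) = q 0 * c := by rw [← hmc]; ring
    have hqq : q 0 * c * (lam₀ - 1) < δ := by
      rw [hqc, div_mul_eq_mul_div, div_lt_iff₀ (by positivity : (0:ℝ) < (m:ℝ))]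
      linarith [hmgt]
    have hsum : QF + 2 * (q 0 * s) = μ * Sz + μ * Sp - 2 * T := by
      linarith [key1, key2]
    have expand : QF + (m:ℝ) * c * s + (m:ℝ) * (c * (s + ((m:ℝ) * c - c)))
        = QF + 2 * (q 0 * s) + q 0 * q 0 - q 0 * c := by
      linear_combination (2 * s + (m:ℝ) * c + q 0 - c) * hmc
    rw [expand, hsum, hmcc]
    nlinarith [ineqT, hqq, hδ]
  have hmr := minEig_le_rayleigh (cliqueExt F R m) y
  have hfin : minEig (cliqueExt F R m) * (y ⬝ᵥ y) < -lam₀ * (y ⬝ᵥ y) :=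
    lt_of_le_of_lt hmr hQclt
  exact lt_of_mul_lt_mul_right hfin (le_of_lt hYpos)
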